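/- Let R be a commutative perfect ring with Jacobson radical J, and let {I_i} be any sequence of finitely generated ideals of R contained in J. Then there exists k > 0 such that I_1 I_2 ··· I_k = 0. -/

import Mathlib

/-- Descending chain condition on finitely generated ideals (one characterization
of commutative perfect rings). -/
def DCCFGIdeals (R : Type*) [CommRing R] : Prop :=
  ∀ I : ℕ → Ideal R, (∀ m, (I m).FG) → (∀ m, I (m + 1) ≤ I m) →
    ∃ N, ∀ m, N ≤ m → I m = I N

theorem stmt_6 {R : Type*} [CommRing R] (hperf : DCCFGIdeals R)
    (I : ℕ → Ideal R) (hfg : ∀ i, (I i).FG)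
    (hJ : ∀ i, I i ≤ (⊥ : Ideal R).jacobson) :
    ∃ k > 0, ∏ i ∈ Finset.range k, I i = ⊥ := by
  set P : ℕ → Ideal R := fun k => ∏ i ∈ Finset.range k, I i with hP
  have hPfg : ∀ m, (P m).FG := by
    intro m
    induction m with
    | zero =>
      simp only [hP, Finset.range_zero, Finset.prod_empty, Ideal.one_eq_top]
      exact ⟨{1}, by simp⟩
    | succ n ih =>
      have : P (n + 1) = P n * I n := by
        simp [hP, Finset.prod_range_succ]
      rw [this]
      exact Submodule.FG.mul ih (hfg n)
  have hPd : ∀ m, P (m + 1) ≤ P m := by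
    intro m
    have : P (m + 1) = P m * I m := by simp [hP, Finset.prod_range_succ]
    rw [this]
    exact Ideal.mul_le_left
  obtain ⟨N, hN⟩ := hperf P hPfg hPd
  refine ⟨N + 1, Nat.succ_pos _, ?_⟩
  have hstep : P (N + 1) = P N := hN (N + 1) (Nat.le_succ _)
  have hmul : P (N + 1) = P N * I N := by simp [hP, Finset.prod_range_succ]
  have hle : P N ≤ I N • P N := by
    rw [smul_eq_mul, mul_comm]
    exact le_of_eq (hstep ▸ hmul)
  have hbot : P N = ⊥ :=
    Submodule.eq_bot_of_le_smul_of_le_jacobson_bot (I N) (P N) (hPfg N) hle (hJ N)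
  rw [show (∏ i ∈ Finset.range (N + 1), I i) = P (N + 1) from rfl, hstep, hbot]
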